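/- Let w ∈ S_n, let m = m_{I,J} be an elusive minor belonging to e = (i,j) ∈ E(w) with I = {i_1 < ... < i_{r+1}}, J = {j_1 < ... < j_{r+1}}, r = r_{i,j}(w). Define the matrix P ∈ Mat_{n×n}(k) with P_{a,b} = 1 if (a,b) = (i_t, j_{r-t+2}) for some 1 ≤ t ≤ r+1 and P_{a,b} = 0 otherwise. Then m does not vanish at P, but every essential minor of I_w other than m vanishes at P. -/
import Mathlib


/-- Rank function of a permutation: `rk w i j = #{a : 1 ≤ a ≤ i, w a ≤ j}`. -/
def rk (w : Equiv.Perm ℕ) (i j : ℕ) : ℕ :=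
  ((Finset.Icc 1 i).filter (fun a => w a ≤ j)).card

/-- `(i,j)` is in the Rothe diagram `D(w)`. -/
def inRothe (w : Equiv.Perm ℕ) (i j : ℕ) : Prop :=
  j < w i ∧ i < w.symm j

instance (w : Equiv.Perm ℕ) (i j : ℕ) : Decidable (inRothe w i j) := by
  unfold inRothe; infer_instance

/-- `(i,j)` is in Fulton's essential set `E(w)`. -/
def inEss (w : Equiv.Perm ℕ) (i j : ℕ) : Prop :=
  inRothe w i j ∧ ¬ inRothe w (i+1) j ∧ ¬ inRothe w i (j+1)

/-- The minor with row set `I` and column set `J` belongs to `(i,j) ∈ E(w)`. -/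
def belongsTo (w : Equiv.Perm ℕ) (I J : Finset ℕ) (i j : ℕ) : Prop :=
  inEss w i j ∧ I ⊆ Finset.Icc 1 i ∧ J ⊆ Finset.Icc 1 j ∧
    I.card = rk w i j + 1 ∧ J.card = rk w i j + 1

/-- The minor `m_{I,J}` attends `M^{[i',j']}`. -/
def attends (w : Equiv.Perm ℕ) (I J : Finset ℕ) (i' j' : ℕ) : Prop :=
  (rk w i' j' < (I ∩ Finset.Icc 1 i').card ∧ (J ∩ Finset.Icc 1 j').card = J.card) ∨
  ((I ∩ Finset.Icc 1 i').card = I.card ∧ rk w i' j' < (J ∩ Finset.Icc 1 j').card)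

/-- The minor `m_{I,J}` belonging to `(i,j) ∈ E(w)` is elusive. -/
def elusive (w : Equiv.Perm ℕ) (I J : Finset ℕ) (i j : ℕ) : Prop :=
  belongsTo w I J i j ∧
    ∀ i' j', inEss w i' j' → rk w i' j' < rk w i j → ¬ attends w I J i' j'

/-- The evaluation at a matrix P of the minor with row set I and column set J. -/
noncomputable def evalMinor {k : Type*} [CommRing k] (P : ℕ → ℕ → k)
    (I J : Finset ℕ) (h : J.card = I.card) : k :=
  (Matrix.of fun a b : Fin I.card =>
    P (I.orderEmbOfFin rfl a) (J.orderEmbOfFin h b)).det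


section lemmas
variable {w : Equiv.Perm ℕ} {n : ℕ}

lemma fix_symm (hw : ∀ a, a ∉ Finset.Icc 1 n → w a = a) :
    ∀ a, a ∉ Finset.Icc 1 n → w.symm a = a := by
  intro a ha
  have := hw a ha
  exact (Equiv.symm_apply_eq w).mpr this.symm

lemma mapsto (hw : ∀ a, a ∉ Finset.Icc 1 n → w a = a) :
    ∀ a, a ∈ Finset.Icc 1 n → w a ∈ Finset.Icc 1 n := by
  intro a ha
  by_contra h
  have hx : w (w a) = w a := hw _ h
  have : w a = a := w.injective hx
  rw [this] at h; exact h ha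

lemma pos_of_fix (hw : ∀ a, a ∉ Finset.Icc 1 n → w a = a) :
    ∀ a, 1 ≤ a → 1 ≤ w a := by
  intro a ha
  by_contra h
  push_neg at h
  interval_cases h' : w a
  have h0 : w 0 = 0 := hw 0 (by simp)
  have := w.injective (h'.trans h0.symm)
  omega

lemma inRothe_bound (hw : ∀ a, a ∉ Finset.Icc 1 n → w a = a) {c d : ℕ}
    (h : inRothe w c d) : 1 ≤ c ∧ 1 ≤ d ∧ c ≤ n ∧ d ≤ n := by
  obtain ⟨h1, h2⟩ := h
  have hc1 : 1 ≤ c := by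
    by_contra hc; push_neg at hc
    have : c = 0 := by omega
    subst this
    have : w 0 = 0 := hw 0 (by simp)
    omega
  have hd1 : 1 ≤ d := by
    by_contra hd; push_neg at hd
    have : d = 0 := by omega
    subst this
    have : w.symm 0 = 0 := fix_symm hw 0 (by simp)
    omega
  have hcn : c ≤ n := by
    by_contra hc; push_neg at hc
    have hwc : w c = c := hw c (by simp; omega)
    -- d < c
    have hdc : d < c := by omega
    by_cases hdn : d ≤ n
    · have := mapsto (fix_symm hw) d (by simp; omega)
      simp at this; omega
    · have : w.symm d = d := fix_symm hw d (by simp; omega)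
      omega
  have hdn : d ≤ n := by
    by_contra hd; push_neg at hd
    have hwd : w.symm d = d := fix_symm hw d (by simp; omega)
    have hcd : c < d := by omega
    by_cases hcn' : c ≤ n
    · have := mapsto hw c (by simp; omega)
      simp at this; omega
    · have : w c = c := hw c (by simp; omega)
      omega
  exact ⟨hc1, hd1, hcn, hdn⟩

lemma rk_mono_left {i i' j : ℕ} (h : i' ≤ i) : rk w i' j ≤ rk w i j := by
  apply Finset.card_le_card
  apply Finset.filter_subset_filter
  exact Finset.Icc_subset_Icc_right h

lemma rk_split {i j j' : ℕ} (h : j' ≤ j) :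
    rk w i j = rk w i j' +
      ((Finset.Icc 1 i).filter (fun a => w a ≤ j ∧ ¬ w a ≤ j')).card := by
  unfold rk
  have key := Finset.card_filter_add_card_filter_not
    (s := (Finset.Icc 1 i).filter (fun a => w a ≤ j)) (p := fun a => w a ≤ j')
  rw [Finset.filter_filter, Finset.filter_filter] at key
  have h1 : Finset.filter (fun a => w a ≤ j ∧ w a ≤ j') (Finset.Icc 1 i)
      = Finset.filter (fun a => w a ≤ j') (Finset.Icc 1 i) := by
    apply Finset.filter_congr
    intro a _
    constructor
    · rintro ⟨_, h2⟩; exact h2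
    · intro h2; exact ⟨le_trans h2 h, h2⟩
  rw [h1] at key
  omega

lemma rk_submod {i i' j j' : ℕ} (hi : i' ≤ i) (hj : j' ≤ j) :
    rk w i' j + rk w i j' ≤ rk w i j + rk w i' j' := by
  rw [rk_split (i := i) hj, rk_split (i := i') hj]
  have : ((Finset.Icc 1 i').filter (fun a => w a ≤ j ∧ ¬ w a ≤ j')).card ≤
      ((Finset.Icc 1 i).filter (fun a => w a ≤ j ∧ ¬ w a ≤ j')).card := by
    apply Finset.card_le_card
    exact Finset.filter_subset_filter _ (Finset.Icc_subset_Icc_right hi)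
  omega

lemma rk_symm (hw : ∀ a, a ∉ Finset.Icc 1 n → w a = a) (i j : ℕ) :
    rk w.symm j i = rk w i j := by
  unfold rk
  apply Finset.card_bij' (fun b _ => w.symm b) (fun a _ => w a)
  · intro b hb
    simp only [Finset.mem_filter, Finset.mem_Icc] at hb ⊢
    refine ⟨⟨pos_of_fix (fix_symm hw) b hb.1.1, hb.2⟩, by simp [hb.1.2]⟩
  · intro a ha
    simp only [Finset.mem_filter, Finset.mem_Icc] at ha ⊢
    refine ⟨⟨pos_of_fix hw a ha.1.1, ha.2⟩, by simp [ha.1.2]⟩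
  · intro b _; simp
  · intro a _; simp

lemma inRothe_symm {i j : ℕ} : inRothe w.symm j i ↔ inRothe w i j := by
  unfold inRothe
  rw [Equiv.symm_symm]
  tauto

lemma inEss_symm {i j : ℕ} : inEss w.symm j i ↔ inEss w i j := by
  unfold inEss
  rw [inRothe_symm, inRothe_symm, inRothe_symm]
  tauto

lemma rk_east {c d : ℕ} (h : inRothe w c (d+1)) : rk w c (d+1) = rk w c d := by
  unfold rk
  congr 1
  apply Finset.filter_congr
  intro a ha
  simp only [Finset.mem_Icc] at ha
  constructor
  · intro h1
    rcases Nat.lt_or_ge (w a) (d+1) with h2 | h2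
    · omega
    · exfalso
      have : w a = d + 1 := by omega
      have : a = w.symm (d+1) := by rw [← this]; simp
      obtain ⟨_, h4⟩ := h
      omega
  · omega

lemma rk_south {c d : ℕ} (h : inRothe w (c+1) d) : rk w (c+1) d = rk w c d := by
  unfold rk
  have hins : Finset.Icc 1 (c+1) = insert (c+1) (Finset.Icc 1 c) := by
    ext z
    simp only [Finset.mem_Icc, Finset.mem_insert]
    omega
  rw [hins, Finset.filter_insert]
  rw [if_neg (by obtain ⟨h1, _⟩ := h; omega)]

lemma walk (hw : ∀ a, a ∉ Finset.Icc 1 n → w a = a) {c d : ℕ}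
    (h : inRothe w c d) :
    ∃ e f, inEss w e f ∧ c ≤ e ∧ d ≤ f ∧ rk w e f = rk w c d := by
  suffices H : ∀ fuel c d, inRothe w c d → 2*n ≤ c + d + fuel →
      ∃ e f, inEss w e f ∧ c ≤ e ∧ d ≤ f ∧ rk w e f = rk w c d by
    exact H (2*n) c d h (by omega)
  intro fuel
  induction fuel with
  | zero =>
    intro c d h hb
    obtain ⟨_, _, hcn, hdn⟩ := inRothe_bound hw h
    refine ⟨c, d, ⟨h, ?_, ?_⟩, le_refl _, le_refl _, rfl⟩
    · intro h'
      obtain ⟨_, _, h3, _⟩ := inRothe_bound hw h'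
      omega
    · intro h'
      obtain ⟨_, _, _, h4⟩ := inRothe_bound hw h'
      omega
  | succ fuel ih =>
    intro c d h hb
    by_cases hE : inRothe w c (d+1)
    · obtain ⟨e, f, hef, hce, hdf, hrk⟩ := ih c (d+1) hE (by omega)
      exact ⟨e, f, hef, hce, by omega, by rw [hrk, rk_east hE]⟩
    · by_cases hS : inRothe w (c+1) d
      · obtain ⟨e, f, hef, hce, hdf, hrk⟩ := ih (c+1) d hS (by omega)
        exact ⟨e, f, hef, by omega, hdf, by rw [hrk, rk_south hS]⟩
      · exact ⟨c, d, ⟨h, hS, hE⟩, le_refl _, le_refl _, rfl⟩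

lemma key (hw : ∀ a, a ∉ Finset.Icc 1 n → w a = a) {i j i' : ℕ}
    (hij : inRothe w i j) (hi' : i' < i) {I J : Finset ℕ}
    (hJ : J ⊆ Finset.Icc 1 j)
    (hx : rk w i' j < (I ∩ Finset.Icc 1 i').card) :
    ∃ e f, inEss w e f ∧ rk w e f ≤ rk w i' j ∧
      rk w e f < (I ∩ Finset.Icc 1 e).card ∧
      (J ∩ Finset.Icc 1 f).card = J.card := by
  set B := (Finset.Icc 1 i').filter (fun a => j < w a) with hB
  have hBne : B.Nonempty := by
    rw [Finset.filter_nonempty_iff]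
    by_contra hne
    push_neg at hne
    have : rk w i' j = i' := by
      unfold rk
      rw [Finset.filter_true_of_mem (fun a ha => by
        have := hne a ha; omega)]
      simp
    have hle : (I ∩ Finset.Icc 1 i').card ≤ i' := by
      calc (I ∩ Finset.Icc 1 i').card ≤ (Finset.Icc 1 i').card :=
        Finset.card_le_card (Finset.inter_subset_right)
      _ = i' := by simp
    omega
  set a := B.max' hBne with ha
  have haB : a ∈ B := B.max'_mem hBne
  simp only [hB, Finset.mem_filter, Finset.mem_Icc] at haB
  obtain ⟨⟨ha1, hai'⟩, haw⟩ := haB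
  have hmax : ∀ c, a < c → c ≤ i' → w c ≤ j := by
    intro c hc1 hc2
    by_contra hcw
    push_neg at hcw
    have : c ∈ B := by
      simp only [hB, Finset.mem_filter, Finset.mem_Icc]
      exact ⟨⟨by omega, hc2⟩, hcw⟩
    have := Finset.le_max' B c this
    omega
  -- rk w i' j = rk w a j + (i' - a)
  have hrka : rk w i' j = rk w a j + (i' - a) := by
    unfold rk
    have hsplit : Finset.Icc 1 i' = Finset.Icc 1 a ∪ Finset.Icc (a+1) i' := by
      ext z
      simp only [Finset.mem_Icc, Finset.mem_union]
      omega
    rw [hsplit, Finset.filter_union, Finset.card_union_of_disjoint]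
    · congr 1
      rw [Finset.filter_true_of_mem (fun c hc => by
        simp only [Finset.mem_Icc] at hc
        exact hmax c (by omega) hc.2)]
      simp
    · apply Finset.disjoint_filter_filter
      rw [Finset.disjoint_left]
      intro z hz1 hz2
      simp only [Finset.mem_Icc] at hz1 hz2
      omega
  have haR : inRothe w a j := by
    refine ⟨haw, ?_⟩
    obtain ⟨_, h2⟩ := hij
    omega
  obtain ⟨e, f, hef, hae, hjf, hrk⟩ := walk hw haR
  refine ⟨e, f, hef, ?_, ?_, ?_⟩
  · rw [hrk]; omega
  · -- rk w e f < (I ∩ Icc 1 e).card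
    have h1 : (I ∩ Finset.Icc 1 i').card ≤ (I ∩ Finset.Icc 1 a).card + (i' - a) := by
      have hsub : I ∩ Finset.Icc 1 i' ⊆ (I ∩ Finset.Icc 1 a) ∪ Finset.Icc (a+1) i' := by
        intro z hz
        simp only [Finset.mem_inter, Finset.mem_Icc] at hz
        simp only [Finset.mem_union, Finset.mem_inter, Finset.mem_Icc]
        obtain ⟨hzI, hz1, hz2⟩ := hz
        by_cases hza : z ≤ a
        · exact Or.inl ⟨hzI, hz1, hza⟩
        · exact Or.inr ⟨by omega, hz2⟩
      calc (I ∩ Finset.Icc 1 i').card ≤ ((I ∩ Finset.Icc 1 a) ∪ Finset.Icc (a+1) i').card :=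
            Finset.card_le_card hsub
        _ ≤ (I ∩ Finset.Icc 1 a).card + (Finset.Icc (a+1) i').card :=
            Finset.card_union_le _ _
        _ = (I ∩ Finset.Icc 1 a).card + (i' - a) := by
            congr 1; rw [Nat.card_Icc]; omega
    have h2 : (I ∩ Finset.Icc 1 a).card ≤ (I ∩ Finset.Icc 1 e).card := by
      apply Finset.card_le_card
      exact Finset.inter_subset_inter (Finset.Subset.refl I) (Finset.Icc_subset_Icc_right hae)
    rw [hrk]
    omega
  · -- J ∩ Icc 1 f = J
    have hJf : J ∩ Finset.Icc 1 f = J := by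
      rw [Finset.inter_eq_left]
      intro z hz
      have hzj := hJ hz
      simp only [Finset.mem_Icc] at hzj ⊢
      omega
    rw [hJf]

end lemmas

lemma card_inter_Icc (s : Finset ℕ) (hs : ∀ z ∈ s, 1 ≤ z) {c : ℕ}
    (hc : s.card = c) (t : Fin c) :
    (s ∩ Finset.Icc 1 (s.orderEmbOfFin hc t)).card = t.val + 1 := by
  have himg : s ∩ Finset.Icc 1 (s.orderEmbOfFin hc t) =
      (Finset.Iic t).image (s.orderEmbOfFin hc) := by
    ext z
    simp only [Finset.mem_inter, Finset.mem_Icc, Finset.mem_image, Finset.mem_Iic]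
    constructor
    · rintro ⟨hzs, _, hzle⟩
      have hzr : z ∈ Set.range (s.orderEmbOfFin hc) := by
        rw [Finset.range_orderEmbOfFin]; exact hzs
      obtain ⟨t', ht'⟩ := hzr
      refine ⟨t', ?_, ht'⟩
      rw [← ht'] at hzle
      exact (OrderEmbedding.le_iff_le _).mp hzle
    · rintro ⟨t', ht'le, ht'⟩
      subst ht'
      exact ⟨Finset.orderEmbOfFin_mem s hc t',
        hs _ (Finset.orderEmbOfFin_mem s hc t'),
        (OrderEmbedding.le_iff_le _).mpr ht'le⟩
  rw [himg, Finset.card_image_of_injective _ (s.orderEmbOfFin hc).injective,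
    Fin.card_Iic]

lemma card_inter_lt {I : Finset ℕ} (hpos : ∀ z ∈ I, 1 ≤ z) {a b : ℕ}
    (hbI : b ∈ I) (hab : a < b) :
    (I ∩ Finset.Icc 1 a).card < (I ∩ Finset.Icc 1 b).card := by
  apply Finset.card_lt_card
  rw [Finset.ssubset_iff_of_subset
    (Finset.inter_subset_inter_left (Finset.Icc_subset_Icc_right hab.le))]
  refine ⟨b, ?_, ?_⟩
  · simp only [Finset.mem_inter, Finset.mem_Icc]
    exact ⟨hbI, hpos b hbI, le_refl b⟩
  · simp only [Finset.mem_inter, Finset.mem_Icc]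
    rintro ⟨_, _, hba⟩
    omega


/-- for an elusive minor m_{I,J} belonging to (i,j), the antidiagonal
point P (with 1's at (i_t, j_{r-t+2})) is a point where m_{I,J} does not vanish but
every other essential minor vanishes. -/
theorem elusive_witness_point (k : Type*) [Field k]
    (n : ℕ) (w : Equiv.Perm ℕ) (hw : ∀ a, a ∉ Finset.Icc 1 n → w a = a)
    (I J : Finset ℕ) (i j : ℕ) (h : J.card = I.card)
    (hel : elusive w I J i j)
    (P : ℕ → ℕ → k)
    (hP : ∀ a b : ℕ, P a b =
      if a ∈ I ∧ b ∈ J ∧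
          (I ∩ Finset.Icc 1 a).card + (J ∩ Finset.Icc 1 b).card = rk w i j + 2
        then 1 else 0) :
    evalMinor P I J h ≠ 0 ∧
    ∀ (i' j' : ℕ) (I' J' : Finset ℕ) (h' : J'.card = I'.card),
      belongsTo w I' J' i' j' → ¬(I' = I ∧ J' = J) →
      evalMinor P I' J' h' = 0 := by
  obtain ⟨hbel, hElu⟩ := hel
  obtain ⟨hess, hIi, hJj, hIcard, hJcard⟩ := hbel
  have hIpos : ∀ z ∈ I, 1 ≤ z := fun z hz => (Finset.mem_Icc.mp (hIi hz)).1
  have hJpos : ∀ z ∈ J, 1 ≤ z := fun z hz => (Finset.mem_Icc.mp (hJj hz)).1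
  constructor
  · -- part 1 : the elusive minor does not vanish
    unfold evalMinor
    have hM : (Matrix.of fun a b : Fin I.card =>
        P (I.orderEmbOfFin rfl a) (J.orderEmbOfFin h b)) =
        fun a b => (1 : Matrix (Fin I.card) (Fin I.card) k) (Fin.revPerm a) b := by
      ext a b
      rw [Matrix.of_apply, hP, Matrix.one_apply]
      have h1 : (I ∩ Finset.Icc 1 (I.orderEmbOfFin rfl a)).card = a.val + 1 :=
        card_inter_Icc I hIpos rfl a
      have h2 : (J ∩ Finset.Icc 1 (J.orderEmbOfFin h b)).card = b.val + 1 :=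
        card_inter_Icc J hJpos h b
      have hmemI : I.orderEmbOfFin rfl a ∈ I := Finset.orderEmbOfFin_mem I rfl a
      have hmemJ : J.orderEmbOfFin h b ∈ J := Finset.orderEmbOfFin_mem J h b
      have hac : a.val < I.card := a.isLt
      have hbc : b.val < I.card := b.isLt
      have hrev : ((Fin.revPerm a : Fin I.card) : ℕ) = I.card - (a.val + 1) := by
        simp [Fin.revPerm, Fin.val_rev]
      by_cases hcond : a.val + b.val = rk w i j
      · rw [if_pos ⟨hmemI, hmemJ, by omega⟩, if_pos]
        apply Fin.ext
        rw [hrev]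
        omega
      · rw [if_neg, if_neg]
        · intro hrevab
          apply hcond
          have := congrArg Fin.val hrevab
          rw [hrev] at this
          omega
        · rintro ⟨_, _, hsum⟩
          omega
    rw [hM]
    have hdp := Matrix.det_permute (Fin.revPerm)
      (1 : Matrix (Fin I.card) (Fin I.card) k)
    rw [show (fun a b => (1 : Matrix (Fin I.card) (Fin I.card) k)
        (Fin.revPerm a) b) = (1 : Matrix (Fin I.card) (Fin I.card) k).submatrix
        Fin.revPerm id from rfl, hdp, Matrix.det_one, mul_one]
    rcases Int.units_eq_one_or (Equiv.Perm.sign (Fin.revPerm : Equiv.Perm (Fin I.card)))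
      with hs | hs <;> rw [hs] <;> simp
  · -- part 2 : every other essential minor vanishes
    intro i' j' I' J' h' hbel' hne
    obtain ⟨hess', hI'i, hJ'j, hI'card, hJ'card⟩ := hbel'
    by_contra hdet
    unfold evalMinor at hdet
    rw [Matrix.det_apply] at hdet
    obtain ⟨σ, -, hσ⟩ := Finset.exists_ne_zero_of_sum_ne_zero hdet
    have hprod : (∏ t, (Matrix.of fun a b : Fin I'.card =>
        P (I'.orderEmbOfFin rfl a) (J'.orderEmbOfFin h' b)) (σ t) t) ≠ 0 := by
      intro h0
      rw [h0, smul_zero] at hσ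
      exact hσ rfl
    have hcond : ∀ t : Fin I'.card,
        I'.orderEmbOfFin rfl (σ t) ∈ I ∧ J'.orderEmbOfFin h' t ∈ J ∧
        (I ∩ Finset.Icc 1 (I'.orderEmbOfFin rfl (σ t))).card +
        (J ∩ Finset.Icc 1 (J'.orderEmbOfFin h' t)).card = rk w i j + 2 := by
      intro t
      have ht := Finset.prod_ne_zero_iff.mp hprod t (Finset.mem_univ t)
      rw [Matrix.of_apply, hP] at ht
      split_ifs at ht with hc
      · exact hc
      · exact absurd rfl ht
    have hI'I : I' ⊆ I := by
      intro z hz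
      have hzr : z ∈ Set.range (I'.orderEmbOfFin (rfl : I'.card = I'.card)) := by
        rw [Finset.range_orderEmbOfFin]; exact hz
      obtain ⟨t, ht⟩ := hzr
      have hc := (hcond (σ.symm t)).1
      rw [Equiv.apply_symm_apply] at hc
      rw [← ht]; exact hc
    have hJ'J : J' ⊆ J := by
      intro z hz
      have hzr : z ∈ Set.range (J'.orderEmbOfFin h') := by
        rw [Finset.range_orderEmbOfFin]; exact hz
      obtain ⟨t, ht⟩ := hzr
      rw [← ht]; exact (hcond t).2.1
    set x := (I ∩ Finset.Icc 1 i').card with hxdef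
    set y := (J ∩ Finset.Icc 1 j').card with hydef
    have hxle : x ≤ rk w i j + 1 := by
      rw [← hIcard]; exact Finset.card_le_card Finset.inter_subset_left
    have hyle : y ≤ rk w i j + 1 := by
      rw [← hJcard]; exact Finset.card_le_card Finset.inter_subset_left
    -- counting: x + y ≥ rk i j + rk i' j' + 2
    have humem : ∀ t : Fin I'.card,
        (I ∩ Finset.Icc 1 (I'.orderEmbOfFin rfl (σ t))).card ∈
          Finset.Icc (rk w i j + 2 - y) x := by
      intro t
      have hc := hcond t
      have hat : I'.orderEmbOfFin rfl (σ t) ≤ i' :=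
        (Finset.mem_Icc.mp (hI'i (Finset.orderEmbOfFin_mem I' rfl (σ t)))).2
      have h1 : (I ∩ Finset.Icc 1 (I'.orderEmbOfFin rfl (σ t))).card ≤ x :=
        Finset.card_le_card
          (Finset.inter_subset_inter_left (Finset.Icc_subset_Icc_right hat))
      have hbt : J'.orderEmbOfFin h' t ≤ j' :=
        (Finset.mem_Icc.mp (hJ'j (Finset.orderEmbOfFin_mem J' h' t))).2
      have h2 : (J ∩ Finset.Icc 1 (J'.orderEmbOfFin h' t)).card ≤ y :=
        Finset.card_le_card
          (Finset.inter_subset_inter_left (Finset.Icc_subset_Icc_right hbt))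
      simp only [Finset.mem_Icc]
      omega
    have huinj : ∀ t1 t2 : Fin I'.card,
        (I ∩ Finset.Icc 1 (I'.orderEmbOfFin rfl (σ t1))).card =
        (I ∩ Finset.Icc 1 (I'.orderEmbOfFin rfl (σ t2))).card → t1 = t2 := by
      intro t1 t2 h12
      by_contra hne12
      have hne' : I'.orderEmbOfFin rfl (σ t1) ≠ I'.orderEmbOfFin rfl (σ t2) := by
        intro heq
        exact hne12 (σ.injective ((I'.orderEmbOfFin rfl).injective heq))
      rcases lt_or_gt_of_ne hne' with hlt | hlt
      · have := card_inter_lt hIpos (hcond t2).1 hlt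
        omega
      · have := card_inter_lt hIpos (hcond t1).1 hlt
        omega
    have hcard2 : I'.card ≤ (Finset.Icc (rk w i j + 2 - y) x).card := by
      have hcc := Finset.card_le_card_of_injOn (s := (Finset.univ : Finset (Fin I'.card)))
        (fun t => (I ∩ Finset.Icc 1 (I'.orderEmbOfFin rfl (σ t))).card)
        (fun t _ => humem t)
        (fun t1 _ t2 _ h12 => huinj t1 t2 h12)
      simpa using hcc
    rw [Nat.card_Icc] at hcard2
    have hxy : rk w i j + rk w i' j' + 2 ≤ x + y := by
      rw [hI'card] at hcard2
      omega
    by_cases hrr : rk w i j ≤ rk w i' j'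
    · apply hne
      refine ⟨Finset.eq_of_subset_of_card_le hI'I (by omega),
              Finset.eq_of_subset_of_card_le hJ'J (by omega)⟩
    · push_neg at hrr
      by_cases hx1 : x = rk w i j + 1
      · exact hElu i' j' hess' hrr (Or.inr ⟨by rw [← hxdef, hx1, hIcard], by omega⟩)
      · by_cases hy1 : y = rk w i j + 1
        · exact hElu i' j' hess' hrr (Or.inl ⟨by omega, by rw [← hydef, hy1, hJcard]⟩)
        · have hi'i : i' < i := by
            by_contra hge
            push_neg at hge
            apply hx1
            rw [hxdef, Finset.inter_eq_left.mpr
              (fun z hz => Finset.Icc_subset_Icc_right hge (hIi hz)), hIcard]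
          have hj'j : j' < j := by
            by_contra hge
            push_neg at hge
            apply hy1
            rw [hydef, Finset.inter_eq_left.mpr
              (fun z hz => Finset.Icc_subset_Icc_right hge (hJj hz)), hJcard]
          have hsub := rk_submod (w := w) hi'i.le hj'j.le
          rcases (show rk w i' j < x ∨ rk w i j' < y by omega) with hc1 | hc1
          · obtain ⟨e, f, hef, hle1, hlt1, heq1⟩ := key hw hess.1 hi'i hJj hc1
            exact hElu e f hef (by omega) (Or.inl ⟨hlt1, heq1⟩)
          · have hc1' : rk w.symm j' i < (J ∩ Finset.Icc 1 j').card := by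
              rw [rk_symm hw]; exact hc1
            obtain ⟨e, f, hef, hle1, hlt1, heq1⟩ :=
              key (fix_symm hw) (inRothe_symm.mpr hess.1) hj'j hIi hc1'
            have hef' : inEss w f e := inEss_symm.mp hef
            have hrs : rk w.symm e f = rk w f e := rk_symm hw f e
            have hrs2 : rk w.symm j' i = rk w i j' := rk_symm hw i j'
            exact hElu f e hef' (by omega) (Or.inr ⟨heq1, by rw [← hrs]; exact hlt1⟩)
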